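/- Let 1 ≤ p < ∞. The Mazur map ψ, defined coordinatewise by ψ(c)_k = c_k·|c_k|^{p/2−1}, is uniformly continuous as a map from the unit sphere of ℓ^p(ℕ) (with the ℓ^p metric) to ℓ²(ℕ). -/

import Mathlib

open Real

private lemma mz_phi_eq_rpow {q : ℝ} (hq : 0 < q) {x : ℝ} (hx : 0 ≤ x) :
    x * |x| ^ (q - 1) = x ^ q := by
  rcases hx.eq_or_lt with h | h
  · simp [← h, Real.zero_rpow hq.ne']
  · rw [abs_of_pos h]
    calc x * x ^ (q - 1) = x ^ (1 : ℝ) * x ^ (q - 1) := by rw [Real.rpow_one]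
      _ = x ^ (1 + (q - 1)) := (Real.rpow_add h 1 (q - 1)).symm
      _ = x ^ q := by norm_num

private lemma mz_phi_neg {q : ℝ} (x : ℝ) :
    (-x) * |(-x)| ^ (q - 1) = -(x * |x| ^ (q - 1)) := by
  rw [abs_neg]; ring

private lemma mz_rpow_add_le {q : ℝ} (hq0 : 0 ≤ q) (hq1 : q ≤ 1) {x y : ℝ}
    (hx : 0 ≤ x) (hy : 0 ≤ y) : (x + y) ^ q ≤ x ^ q + y ^ q := by
  lift x to NNReal using hx
  lift y to NNReal using hy
  have := NNReal.rpow_add_le_add_rpow x y hq0 hq1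
  exact_mod_cast this

private lemma mz_sub_rpow_small {q : ℝ} (hq0 : 0 < q) (hq1 : q ≤ 1) {a b : ℝ}
    (hb : 0 ≤ b) (hba : b ≤ a) : a ^ q - b ^ q ≤ (a - b) ^ q := by
  have h := mz_rpow_add_le hq0.le hq1 (sub_nonneg.mpr hba) hb
  rw [sub_add_cancel] at h
  linarith

private lemma mz_abs_rpow_small {q : ℝ} (hq0 : 0 < q) (hq1 : q ≤ 1) {a b : ℝ}
    (ha : 0 ≤ a) (hb : 0 ≤ b) : |a ^ q - b ^ q| ≤ |a - b| ^ q := by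
  rcases le_total b a with h | h
  · rw [abs_of_nonneg (sub_nonneg.mpr (Real.rpow_le_rpow hb h hq0.le)),
      abs_of_nonneg (sub_nonneg.mpr h)]
    exact mz_sub_rpow_small hq0 hq1 hb h
  · rw [abs_sub_comm, abs_sub_comm a b,
      abs_of_nonneg (sub_nonneg.mpr (Real.rpow_le_rpow ha h hq0.le)),
      abs_of_nonneg (sub_nonneg.mpr h)]
    exact mz_sub_rpow_small hq0 hq1 ha h

private lemma mz_small_pt {q : ℝ} (hq0 : 0 < q) (hq1 : q ≤ 1) (a b : ℝ) :
    |a * |a| ^ (q - 1) - b * |b| ^ (q - 1)| ≤ 2 * |a - b| ^ q := by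
  have key : ∀ x y : ℝ, 0 ≤ x → y ≤ 0 →
      |x * |x| ^ (q - 1) - y * |y| ^ (q - 1)| ≤ 2 * |x - y| ^ q := by
    intro x y hx hy
    have hy' : 0 ≤ -y := by linarith
    have h1 : y * |y| ^ (q - 1) = -((-y) ^ q) := by
      rw [← mz_phi_eq_rpow hq0 hy', mz_phi_neg]; ring_nf
    rw [h1, mz_phi_eq_rpow hq0 hx, sub_neg_eq_add]
    have hxy : 0 ≤ x - y := by linarith
    have h2 : x ^ q ≤ (x - y) ^ q := Real.rpow_le_rpow hx (by linarith) hq0.le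
    have h3 : (-y) ^ q ≤ (x - y) ^ q := Real.rpow_le_rpow hy' (by linarith) hq0.le
    have h4 : 0 ≤ x ^ q := Real.rpow_nonneg hx q
    have h5 : 0 ≤ (-y) ^ q := Real.rpow_nonneg hy' q
    rw [abs_of_nonneg (by linarith), abs_of_nonneg hxy]
    linarith
  rcases le_total 0 a with ha | ha <;> rcases le_total 0 b with hb | hb
  · rw [mz_phi_eq_rpow hq0 ha, mz_phi_eq_rpow hq0 hb]
    calc |a ^ q - b ^ q| ≤ |a - b| ^ q := mz_abs_rpow_small hq0 hq1 ha hb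
      _ ≤ 2 * |a - b| ^ q := by nlinarith [Real.rpow_nonneg (abs_nonneg (a - b)) q]
  · exact key a b ha hb
  · have := key b a hb ha
    rw [abs_sub_comm, abs_sub_comm b a] at this
    exact this
  · have ha' : 0 ≤ -a := by linarith
    have hb' : 0 ≤ -b := by linarith
    have h1 : a * |a| ^ (q - 1) = -((-a) ^ q) := by
      rw [← mz_phi_eq_rpow hq0 ha', mz_phi_neg]; ring_nf
    have h2 : b * |b| ^ (q - 1) = -((-b) ^ q) := by
      rw [← mz_phi_eq_rpow hq0 hb', mz_phi_neg]; ring_nf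
    rw [h1, h2, show -(-a) ^ q - -(-b) ^ q = (-b) ^ q - (-a) ^ q from by ring]
    calc |(-b) ^ q - (-a) ^ q| ≤ |(-b) - (-a)| ^ q := mz_abs_rpow_small hq0 hq1 hb' ha'
      _ = |a - b| ^ q := by rw [show (-b) - (-a) = a - b by ring]
      _ ≤ 2 * |a - b| ^ q := by nlinarith [Real.rpow_nonneg (abs_nonneg (a - b)) q]

private lemma mz_mvt {q : ℝ} (hq : 1 ≤ q) {a b : ℝ} (hb : 0 ≤ b) (hba : b ≤ a) :
    a ^ q - b ^ q ≤ q * (a - b) * a ^ (q - 1) := by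
  rcases hba.eq_or_lt with h | h
  · subst h; simp
  · have hcont : ContinuousOn (fun x : ℝ => x ^ q) (Set.Icc b a) := by
      intro x _
      exact ((Real.hasDerivAt_rpow_const (p := q) (Or.inr hq)).continuousAt).continuousWithinAt
    have hderiv : ∀ x ∈ Set.Ioo b a, HasDerivAt (fun x : ℝ => x ^ q) (q * x ^ (q - 1)) x :=
      fun x _ => Real.hasDerivAt_rpow_const (Or.inr hq)
    obtain ⟨t, ht, hslope⟩ := exists_hasDerivAt_eq_slope (fun x : ℝ => x ^ q)
      (fun x => q * x ^ (q - 1)) h hcont hderiv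
    have ht0 : 0 ≤ t := le_trans hb ht.1.le
    have hta : t ≤ a := ht.2.le
    have hmono : t ^ (q - 1) ≤ a ^ (q - 1) := Real.rpow_le_rpow ht0 hta (by linarith)
    have hq0 : 0 ≤ q := by linarith
    have : (a ^ q - b ^ q) / (a - b) = q * t ^ (q - 1) := hslope.symm
    have hab : 0 < a - b := by linarith
    have heq : a ^ q - b ^ q = q * t ^ (q - 1) * (a - b) := by
      field_simp at this; linarith [this]
    rw [heq]
    have h1 : q * t ^ (q - 1) ≤ q * a ^ (q - 1) := by nlinarith
    nlinarith

private lemma mz_rpow_le_mul {q : ℝ} (hq : 1 ≤ q) {a M : ℝ} (ha : 0 ≤ a) (haM : a ≤ M) :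
    a ^ q ≤ a * M ^ (q - 1) := by
  rcases ha.eq_or_lt with h | h
  · rw [← h, Real.zero_rpow (by linarith : q ≠ 0)]; simp
  · calc a ^ q = a ^ (1 + (q - 1)) := by norm_num
      _ = a ^ (1 : ℝ) * a ^ (q - 1) := Real.rpow_add h 1 (q - 1)
      _ = a * a ^ (q - 1) := by rw [Real.rpow_one]
      _ ≤ a * M ^ (q - 1) := by
          have := Real.rpow_le_rpow ha haM (by linarith : 0 ≤ q - 1)
          nlinarith

private lemma mz_large_pt {q : ℝ} (hq : 1 ≤ q) (a b : ℝ) :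
    |a * |a| ^ (q - 1) - b * |b| ^ (q - 1)| ≤
      q * |a - b| * (max |a| |b|) ^ (q - 1) := by
  have hq0 : 0 < q := by linarith
  -- same-sign (both nonneg) case
  have same : ∀ x y : ℝ, 0 ≤ x → 0 ≤ y →
      |x ^ q - y ^ q| ≤ q * |x - y| * (max x y) ^ (q - 1) := by
    intro x y hx hy
    rcases le_total y x with h | h
    · rw [max_eq_left h, abs_of_nonneg (sub_nonneg.mpr (Real.rpow_le_rpow hy h hq0.le)),
        abs_of_nonneg (sub_nonneg.mpr h)]
      exact mz_mvt hq hy h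
    · rw [max_eq_right h, abs_sub_comm, abs_sub_comm x y,
        abs_of_nonneg (sub_nonneg.mpr (Real.rpow_le_rpow hx h hq0.le)),
        abs_of_nonneg (sub_nonneg.mpr h)]
      exact mz_mvt hq hx h
  -- mixed-sign case
  have key : ∀ x y : ℝ, 0 ≤ x → y ≤ 0 →
      |x * |x| ^ (q - 1) - y * |y| ^ (q - 1)| ≤ q * |x - y| * (max |x| |y|) ^ (q - 1) := by
    intro x y hx hy
    have hy' : 0 ≤ -y := by linarith
    have h1 : y * |y| ^ (q - 1) = -((-y) ^ q) := by
      rw [← mz_phi_eq_rpow hq0 hy', mz_phi_neg]; ring_nf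
    rw [h1, mz_phi_eq_rpow hq0 hx, sub_neg_eq_add]
    set M := max |x| |y| with hM
    have hM0 : 0 ≤ M := le_trans (abs_nonneg x) (le_max_left _ _)
    have hxM : x ≤ M := le_trans (le_abs_self x) (le_max_left _ _)
    have hyM : -y ≤ M := by
      have h0 : -y ≤ |y| := by rw [← abs_neg]; exact le_abs_self _
      exact le_trans h0 (le_max_right _ _)
    have h2 : x ^ q ≤ x * M ^ (q - 1) := mz_rpow_le_mul hq hx hxM
    have h3 : (-y) ^ q ≤ (-y) * M ^ (q - 1) := mz_rpow_le_mul hq hy' hyM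
    have h4 : 0 ≤ x ^ q := Real.rpow_nonneg hx q
    have h5 : 0 ≤ (-y) ^ q := Real.rpow_nonneg hy' q
    have habs : |x - y| = x + (-y) := by rw [abs_of_nonneg (by linarith)]; ring
    rw [abs_of_nonneg (by linarith), habs]
    have hMq : 0 ≤ M ^ (q - 1) := Real.rpow_nonneg hM0 _
    nlinarith [Real.rpow_nonneg hM0 (q-1)]
  rcases le_total 0 a with ha | ha <;> rcases le_total 0 b with hb | hb
  · rw [mz_phi_eq_rpow hq0 ha, mz_phi_eq_rpow hq0 hb, abs_of_nonneg ha, abs_of_nonneg hb]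
    exact same a b ha hb
  · exact key a b ha hb
  · have := key b a hb ha
    rw [abs_sub_comm, abs_sub_comm b a, max_comm] at this
    exact this
  · have ha' : 0 ≤ -a := by linarith
    have hb' : 0 ≤ -b := by linarith
    have h1 : a * |a| ^ (q - 1) = -((-a) ^ q) := by
      rw [← mz_phi_eq_rpow hq0 ha', mz_phi_neg]; ring_nf
    have h2 : b * |b| ^ (q - 1) = -((-b) ^ q) := by
      rw [← mz_phi_eq_rpow hq0 hb', mz_phi_neg]; ring_nf
    rw [h1, h2, show -(-a) ^ q - -(-b) ^ q = (-b) ^ q - (-a) ^ q from by ring]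
    have h3 := same (-b) (-a) hb' ha'
    rw [show (-b) - (-a) = a - b from by ring, max_comm] at h3
    rw [abs_of_nonpos ha, abs_of_nonpos hb]
    exact h3

private lemma mz_small_sq {q : ℝ} (hq0 : 0 < q) (hq1 : q ≤ 1) (a b : ℝ) :
    (a * |a| ^ (q - 1) - b * |b| ^ (q - 1)) ^ 2 ≤ 4 * |a - b| ^ (2 * q) := by
  have h := mz_small_pt hq0 hq1 a b
  have h2 := pow_le_pow_left₀ (abs_nonneg _) h 2
  rw [sq_abs] at h2
  have h3 : (|a - b| ^ q) ^ (2 : ℕ) = |a - b| ^ (2 * q) := by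
    rw [← Real.rpow_natCast (|a - b| ^ q) 2, ← Real.rpow_mul (abs_nonneg _)]
    norm_num [mul_comm]
  nlinarith [h3, h2]

private lemma mz_large_sq {q : ℝ} (hq : 1 ≤ q) (a b : ℝ) :
    (a * |a| ^ (q - 1) - b * |b| ^ (q - 1)) ^ 2 ≤
      q ^ 2 * ((a - b) ^ 2 * (max |a| |b|) ^ (2 * (q - 1))) := by
  have hM0 : (0:ℝ) ≤ max |a| |b| := le_trans (abs_nonneg a) (le_max_left _ _)
  have h := mz_large_pt hq a b
  have h2 := pow_le_pow_left₀ (abs_nonneg _) h 2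
  rw [sq_abs] at h2
  have h3 : ((max |a| |b|) ^ (q - 1)) ^ (2 : ℕ) = (max |a| |b|) ^ (2 * (q - 1)) := by
    rw [← Real.rpow_natCast ((max |a| |b|) ^ (q - 1)) 2, ← Real.rpow_mul hM0]
    norm_num [mul_comm]
  have h4 : (q * |a - b| * (max |a| |b|) ^ (q - 1)) ^ 2
      = q ^ 2 * ((a - b) ^ 2 * ((max |a| |b|) ^ (q - 1)) ^ (2:ℕ)) := by
    rw [mul_pow, mul_pow, sq_abs]; ring
  rw [h4, h3] at h2
  exact h2
private lemma mz_max_bound {p : ℝ} (hp0 : 0 < p) (x y : ℝ) :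
    (max |x| |y|) ^ p ≤ |x| ^ p + |y| ^ p := by
  rcases max_cases |x| |y| with ⟨h, _⟩ | ⟨h, _⟩ <;> rw [h] <;>
    nlinarith [Real.rpow_nonneg (abs_nonneg x) p, Real.rpow_nonneg (abs_nonneg y) p]

private lemma mz_cd_bound {p : ℝ} (hp0 : 0 < p) (x y : ℝ) :
    |x - y| ^ p ≤ 2 ^ p * (|x| ^ p + |y| ^ p) := by
  have hM0 : (0:ℝ) ≤ max |x| |y| := le_trans (abs_nonneg x) (le_max_left _ _)
  have h1 : |x - y| ≤ 2 * max |x| |y| := by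
    have h := abs_sub x y
    have h2 : |x| ≤ max |x| |y| := le_max_left _ _
    have h3 : |y| ≤ max |x| |y| := le_max_right _ _
    linarith
  have h2 := Real.rpow_le_rpow (abs_nonneg _) h1 hp0.le
  rw [Real.mul_rpow (by norm_num) hM0] at h2
  have h3 := mz_max_bound hp0 x y
  have h4 : (0:ℝ) ≤ 2 ^ p := Real.rpow_nonneg (by norm_num) p
  nlinarith

/-- The Mazur map `ψ(c)ₖ = cₖ·|cₖ|^(p/2−1)` is uniformly continuous from the
unit sphere of `ℓᵖ(ℕ)` (with the `ℓᵖ` metric) to `ℓ²(ℕ)`. -/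
theorem mazur_map_uniformly_continuous (p : ℝ) (hp : 1 ≤ p) :
    ∀ ε : ℝ, 0 < ε → ∃ δ : ℝ, 0 < δ ∧ ∀ c d : ℕ → ℝ,
      Summable (fun k => |c k| ^ p) → (∑' k, |c k| ^ p) = 1 →
      Summable (fun k => |d k| ^ p) → (∑' k, |d k| ^ p) = 1 →
      (∑' k, |c k - d k| ^ p) ^ (1 / p) < δ →
      (∑' k, (c k * |c k| ^ (p / 2 - 1) - d k * |d k| ^ (p / 2 - 1)) ^ 2)
        ^ ((1 : ℝ) / 2) < ε := by
  intro ε hε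
  have hp0 : 0 < p := by linarith
  rcases le_or_gt p 2 with hple | hpgt
  -- Case 1 ≤ p ≤ 2
  · refine ⟨(ε ^ 2 / 8) ^ (1 / p), Real.rpow_pos_of_pos (by positivity) _, ?_⟩
    intro c d hc hc1 hd hd1 hlt
    have hT0 : (0:ℝ) ≤ ∑' k, |c k - d k| ^ p :=
      tsum_nonneg fun k => Real.rpow_nonneg (abs_nonneg _) p
    have hTlt : (∑' k, |c k - d k| ^ p) < ε ^ 2 / 8 := by
      have h1 : ((∑' k, |c k - d k| ^ p) ^ (1/p)) ^ p < ((ε ^ 2 / 8) ^ (1/p)) ^ p :=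
        Real.rpow_lt_rpow (Real.rpow_nonneg hT0 _) hlt hp0
      rwa [← Real.rpow_mul hT0, ← Real.rpow_mul (by positivity : (0:ℝ) ≤ ε ^ 2 / 8),
        one_div_mul_cancel hp0.ne', Real.rpow_one, Real.rpow_one] at h1
    have hcd_sum : Summable (fun k => |c k - d k| ^ p) :=
      Summable.of_nonneg_of_le (fun k => Real.rpow_nonneg (abs_nonneg _) p)
        (fun k => mz_cd_bound hp0 (c k) (d k)) ((hc.add hd).mul_left ((2:ℝ) ^ p))
    have hpt : ∀ k, (c k * |c k| ^ (p / 2 - 1) - d k * |d k| ^ (p / 2 - 1)) ^ 2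
        ≤ 4 * |c k - d k| ^ p := by
      intro k
      have h := mz_small_sq (q := p / 2) (by positivity) (by linarith) (c k) (d k)
      rwa [show 2 * (p / 2) = p from by ring] at h
    have hbig : Summable (fun k => 4 * |c k - d k| ^ p) := hcd_sum.mul_left 4
    have hS_sum : Summable (fun k =>
        (c k * |c k| ^ (p / 2 - 1) - d k * |d k| ^ (p / 2 - 1)) ^ 2) :=
      Summable.of_nonneg_of_le (fun k => sq_nonneg _) hpt hbig
    have hS_le : (∑' k, (c k * |c k| ^ (p / 2 - 1) - d k * |d k| ^ (p / 2 - 1)) ^ 2)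
        ≤ 4 * ∑' k, |c k - d k| ^ p := by
      calc (∑' k, (c k * |c k| ^ (p / 2 - 1) - d k * |d k| ^ (p / 2 - 1)) ^ 2)
          ≤ ∑' k, 4 * |c k - d k| ^ p := Summable.tsum_le_tsum hpt hS_sum hbig
        _ = 4 * ∑' k, |c k - d k| ^ p := tsum_mul_left
    have hS0 : (0:ℝ) ≤ ∑' k, (c k * |c k| ^ (p / 2 - 1) - d k * |d k| ^ (p / 2 - 1)) ^ 2 :=
      tsum_nonneg fun k => sq_nonneg _
    have hSlt : (∑' k, (c k * |c k| ^ (p / 2 - 1) - d k * |d k| ^ (p / 2 - 1)) ^ 2) < ε ^ 2 := by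
      nlinarith
    calc (∑' k, (c k * |c k| ^ (p / 2 - 1) - d k * |d k| ^ (p / 2 - 1)) ^ 2) ^ ((1:ℝ)/2)
        < (ε ^ 2) ^ ((1:ℝ)/2) := Real.rpow_lt_rpow hS0 hSlt (by norm_num)
      _ = ε := by
          rw [← Real.rpow_two, ← Real.rpow_mul hε.le]
          norm_num
  -- Case 2 < p
  · refine ⟨ε / p, by positivity, ?_⟩
    intro c d hc hc1 hd hd1 hlt
    have hpm2 : (0:ℝ) < p - 2 := by linarith
    have hT0 : (0:ℝ) ≤ ∑' k, |c k - d k| ^ p :=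
      tsum_nonneg fun k => Real.rpow_nonneg (abs_nonneg _) p
    have hTlt : (∑' k, |c k - d k| ^ p) < (ε / p) ^ p := by
      have h1 : ((∑' k, |c k - d k| ^ p) ^ (1/p)) ^ p < (ε / p) ^ p :=
        Real.rpow_lt_rpow (Real.rpow_nonneg hT0 _) hlt hp0
      rwa [← Real.rpow_mul hT0, one_div_mul_cancel hp0.ne', Real.rpow_one] at h1
    have hcd_sum : Summable (fun k => |c k - d k| ^ p) :=
      Summable.of_nonneg_of_le (fun k => Real.rpow_nonneg (abs_nonneg _) p)
        (fun k => mz_cd_bound hp0 (c k) (d k)) ((hc.add hd).mul_left ((2:ℝ) ^ p))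
    have hM0 : ∀ k, (0:ℝ) ≤ max |c k| |d k| :=
      fun k => le_trans (abs_nonneg _) (le_max_left _ _)
    have hMsum : Summable (fun k => (max |c k| |d k|) ^ p) :=
      Summable.of_nonneg_of_le (fun k => Real.rpow_nonneg (hM0 k) p)
        (fun k => mz_max_bound hp0 (c k) (d k)) (hc.add hd)
    have hU0 : (0:ℝ) ≤ ∑' k, (max |c k| |d k|) ^ p :=
      tsum_nonneg fun k => Real.rpow_nonneg (hM0 k) p
    have hU_le : (∑' k, (max |c k| |d k|) ^ p) ≤ 2 := by
      calc (∑' k, (max |c k| |d k|) ^ p)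
          ≤ ∑' k, (|c k| ^ p + |d k| ^ p) :=
            Summable.tsum_le_tsum (fun k => mz_max_bound hp0 (c k) (d k)) hMsum (hc.add hd)
        _ = 1 + 1 := by rw [hc.tsum_add hd, hc1, hd1]
        _ = 2 := by norm_num
    have hconj : Real.HolderConjugate (p/2) (p/(p-2)) := by
      rw [Real.holderConjugate_iff]
      constructor
      · linarith
      · rw [inv_div, inv_div]
        field_simp
        ring
    have e1 : ∀ k, ((c k - d k) ^ 2 : ℝ) ^ (p/2) = |c k - d k| ^ p := by
      intro k
      rw [← sq_abs, ← Real.rpow_natCast |c k - d k| 2, ← Real.rpow_mul (abs_nonneg _)]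
      congr 1
      push_cast
      ring
    have e2 : ∀ k, ((max |c k| |d k|) ^ (p-2) : ℝ) ^ (p/(p-2)) = (max |c k| |d k|) ^ p := by
      intro k
      rw [← Real.rpow_mul (hM0 k)]
      congr 1
      field_simp
    obtain ⟨hfg_sum, hfg_le⟩ := summable_and_inner_le_Lp_mul_Lq_tsum_of_nonneg hconj
      (fun k => sq_nonneg (c k - d k)) (fun k => Real.rpow_nonneg (hM0 k) (p-2))
      (hcd_sum.congr fun k => (e1 k).symm) (hMsum.congr fun k => (e2 k).symm)
    rw [tsum_congr e1, tsum_congr e2] at hfg_le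
    have hA : (∑' k, |c k - d k| ^ p) ^ (1/(p/2)) < (ε/p) ^ 2 := by
      rw [one_div_div]
      have h1 : (∑' k, |c k - d k| ^ p) ^ (2/p) < ((ε/p) ^ p) ^ (2/p) :=
        Real.rpow_lt_rpow hT0 hTlt (by positivity)
      rwa [← Real.rpow_mul (by positivity : (0:ℝ) ≤ ε/p),
        show p * (2/p) = 2 from by field_simp, Real.rpow_two] at h1
    have hB : (∑' k, (max |c k| |d k|) ^ p) ^ (1/(p/(p-2))) ≤ 2 := by
      rw [one_div_div]
      calc (∑' k, (max |c k| |d k|) ^ p) ^ ((p-2)/p)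
          ≤ (2:ℝ) ^ ((p-2)/p) := Real.rpow_le_rpow hU0 hU_le (by positivity)
        _ ≤ (2:ℝ) ^ (1:ℝ) :=
            Real.rpow_le_rpow_of_exponent_le one_le_two (by rw [div_le_one hp0]; linarith)
        _ = 2 := Real.rpow_one 2
    have hApos : (0:ℝ) ≤ (∑' k, |c k - d k| ^ p) ^ (1/(p/2)) := Real.rpow_nonneg hT0 _
    have hBpos : (0:ℝ) ≤ (∑' k, (max |c k| |d k|) ^ p) ^ (1/(p/(p-2))) :=
      Real.rpow_nonneg hU0 _
    have hfg_lt : (∑' k, (c k - d k) ^ 2 * (max |c k| |d k|) ^ (p-2)) < (ε/p) ^ 2 * 2 := by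
      refine lt_of_le_of_lt hfg_le ?_
      nlinarith
    have hpt : ∀ k, (c k * |c k| ^ (p / 2 - 1) - d k * |d k| ^ (p / 2 - 1)) ^ 2
        ≤ (p/2) ^ 2 * ((c k - d k) ^ 2 * (max |c k| |d k|) ^ (p - 2)) := by
      intro k
      have h := mz_large_sq (q := p/2) (by linarith) (c k) (d k)
      rwa [show 2 * (p/2 - 1) = p - 2 from by ring] at h
    have hbig : Summable (fun k =>
        (p/2) ^ 2 * ((c k - d k) ^ 2 * (max |c k| |d k|) ^ (p - 2))) :=
      hfg_sum.mul_left _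
    have hS_sum : Summable (fun k =>
        (c k * |c k| ^ (p / 2 - 1) - d k * |d k| ^ (p / 2 - 1)) ^ 2) :=
      Summable.of_nonneg_of_le (fun k => sq_nonneg _) hpt hbig
    have hS_le : (∑' k, (c k * |c k| ^ (p / 2 - 1) - d k * |d k| ^ (p / 2 - 1)) ^ 2)
        ≤ (p/2) ^ 2 * ∑' k, (c k - d k) ^ 2 * (max |c k| |d k|) ^ (p - 2) := by
      calc (∑' k, (c k * |c k| ^ (p / 2 - 1) - d k * |d k| ^ (p / 2 - 1)) ^ 2)
          ≤ ∑' k, (p/2) ^ 2 * ((c k - d k) ^ 2 * (max |c k| |d k|) ^ (p - 2)) :=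
            Summable.tsum_le_tsum hpt hS_sum hbig
        _ = (p/2) ^ 2 * ∑' k, (c k - d k) ^ 2 * (max |c k| |d k|) ^ (p - 2) := tsum_mul_left
    have hS0 : (0:ℝ) ≤ ∑' k, (c k * |c k| ^ (p / 2 - 1) - d k * |d k| ^ (p / 2 - 1)) ^ 2 :=
      tsum_nonneg fun k => sq_nonneg _
    have h9 : (p/2) ^ 2 * ((ε/p) ^ 2 * 2) = ε ^ 2 / 2 := by
      field_simp
    have hSlt : (∑' k, (c k * |c k| ^ (p / 2 - 1) - d k * |d k| ^ (p / 2 - 1)) ^ 2) < ε ^ 2 := by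
      have hA2 : (0:ℝ) < (p/2) ^ 2 := by positivity
      have h10 := mul_lt_mul_of_pos_left hfg_lt hA2
      have hε2 : (0:ℝ) < ε ^ 2 := by positivity
      nlinarith
    calc (∑' k, (c k * |c k| ^ (p / 2 - 1) - d k * |d k| ^ (p / 2 - 1)) ^ 2) ^ ((1:ℝ)/2)
        < (ε ^ 2) ^ ((1:ℝ)/2) := Real.rpow_lt_rpow hS0 hSlt (by norm_num)
      _ = ε := by
          rw [← Real.rpow_two, ← Real.rpow_mul hε.le]
          norm_num
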